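/- Let P_b, U_b ∈ C^{n_b×n_{b+1}} be [Δ_b]-stable on Δ_{b+1} for b = 1,…,t, with P_b ∼ U_b (i.e., P_b^{-+} = U_b^{-+}) for each b. Then P₁P₂⋯P_t ∼ U₁U₂⋯U_t, i.e., (P₁⋯P_t)^{-+} = (U₁⋯U_t)^{-+}. -/

import Mathlib

/-- Product `M 0 * M 1 * ⋯ * M (t-1)` of a chain of composable complex matrices. -/
noncomputable def chainProd : ∀ (t : ℕ) (τ : Fin (t + 1) → Type) [∀ i, Fintype (τ i)]
    [∀ i, DecidableEq (τ i)]
    (_ : ∀ b : Fin t, Matrix (τ b.castSucc) (τ b.succ) ℂ),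
    Matrix (τ 0) (τ (Fin.last t)) ℂ
  | 0, τ, _, _, _ => (1 : Matrix (τ 0) (τ 0) ℂ)
  | (t + 1), τ, _, _, M =>
      M 0 * chainProd t (fun i => τ i.succ) (fun b => M b.succ)

/-- `P` is `[Δ]`-stable on `Sg`. -/
def IsStableOn {m n : ℕ} (P : Matrix (Fin m) (Fin n) ℂ)
    (Δ : Finpartition (Finset.univ : Finset (Fin m)))
    (Sg : Finpartition (Finset.univ : Finset (Fin n))) : Prop :=
  ∀ K ∈ Δ.parts, ∀ L ∈ Sg.parts, ∀ i ∈ K, ∀ i' ∈ K,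
    ∑ j ∈ L, P i j = ∑ j ∈ L, P i' j


theorem chainProd_key (t : ℕ) : ∀ (n : Fin (t + 1) → ℕ)
    (Δ : ∀ i : Fin (t + 1), Finpartition (Finset.univ : Finset (Fin (n i))))
    (P U : ∀ b : Fin t, Matrix (Fin (n b.castSucc)) (Fin (n b.succ)) ℂ),
    (∀ b : Fin t, ∀ K ∈ (Δ b.castSucc).parts, ∀ L ∈ (Δ b.succ).parts, ∀ i ∈ K, ∀ i' ∈ K,
      ∑ j ∈ L, P b i j = ∑ j ∈ L, U b i' j) →
    ∀ K ∈ (Δ 0).parts, ∀ L ∈ (Δ (Fin.last t)).parts, ∀ i ∈ K, ∀ i' ∈ K,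
      ∑ j ∈ L, chainProd t (fun i => Fin (n i)) P i j =
      ∑ j ∈ L, chainProd t (fun i => Fin (n i)) U i' j := by
  induction t with
  | zero =>
    intro n Δ P U hsim K hK L hL i hi i' hi'
    have hL' : L ∈ (Δ 0).parts := hL
    simp only [chainProd, Matrix.one_apply]
    rw [Finset.sum_ite_eq, Finset.sum_ite_eq]
    by_cases h : i ∈ L
    · have hKL : K = L := (Δ 0).eq_of_mem_parts hK hL' hi h
      have h' : i' ∈ L := hKL ▸ hi'
      simp [h, h']
    · have h' : i' ∉ L := fun hh => h (((Δ 0).eq_of_mem_parts hK hL' hi' hh) ▸ hi)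
      simp [h, h']
  | succ t ih =>
    intro n Δ P U hsim K hK L hL i hi i' hi'
    have hUU : ∀ b : Fin (t+1), ∀ K ∈ (Δ b.castSucc).parts, ∀ L ∈ (Δ b.succ).parts,
        ∀ i ∈ K, ∀ i' ∈ K, ∑ j ∈ L, U b i j = ∑ j ∈ L, U b i' j := by
      intro b K hK L hL x hx y hy
      exact (hsim b K hK L hL x hx x hx).symm.trans (hsim b K hK L hL x hx y hy)
    have hsim' : ∀ b : Fin t, ∀ K ∈ (Δ b.succ.castSucc).parts, ∀ L ∈ (Δ b.succ.succ).parts,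
        ∀ i ∈ K, ∀ i' ∈ K, ∑ j ∈ L, P b.succ i j = ∑ j ∈ L, U b.succ i' j :=
      fun b => hsim b.succ
    have hIHPU := ih (fun i => n i.succ) (fun i => Δ i.succ) (fun b => P b.succ)
      (fun b => U b.succ) hsim'
    have hIHUU := ih (fun i => n i.succ) (fun i => Δ i.succ) (fun b => U b.succ)
      (fun b => U b.succ) (fun b => hUU b.succ)
    set QP := chainProd t (fun i => Fin (n i.succ)) (fun b => P b.succ) with hQP
    set QU := chainProd t (fun i => Fin (n i.succ)) (fun b => U b.succ) with hQU
    have expand : ∀ (M : Matrix (Fin (n (0 : Fin (t+1)).castSucc)) (Fin (n (0 : Fin (t+1)).succ)) ℂ)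
        (Q : Matrix (Fin (n (0 : Fin (t+1)).succ)) (Fin (n (Fin.last (t+1)))) ℂ)
        (x : Fin (n (0 : Fin (t+1)).castSucc)),
        ∑ j ∈ L, (M * Q) x j = ∑ k, M x k * ∑ j ∈ L, Q k j := by
      intro M Q x
      simp only [Matrix.mul_apply]
      rw [Finset.sum_comm]
      simp [Finset.mul_sum]
    show ∑ j ∈ L, (P 0 * QP) i j = ∑ j ∈ L, (U 0 * QU) i' j
    rw [show ∑ j ∈ L, (P 0 * QP) i j = _ from expand (P 0) QP i,
      show ∑ j ∈ L, (U 0 * QU) i' j = _ from expand (U 0) QU i']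
    have hdisj := (Δ (0 : Fin (t+1)).succ).supIndep.pairwiseDisjoint
    rw [show (Finset.univ : Finset (Fin (n (0 : Fin (t+1)).succ)))
        = (Δ (0 : Fin (t+1)).succ).parts.biUnion id from ((Δ _).biUnion_parts).symm,
      Finset.sum_biUnion hdisj, Finset.sum_biUnion hdisj]
    apply Finset.sum_congr rfl
    intro A hA
    obtain ⟨k0, hk0⟩ := (Δ (0 : Fin (t+1)).succ).nonempty_of_mem_parts hA
    calc ∑ k ∈ A, P 0 i k * ∑ j ∈ L, QP k j
        = ∑ k ∈ A, P 0 i k * ∑ j ∈ L, QU k0 j := by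
          exact Finset.sum_congr rfl fun k hk =>
            congrArg (fun z => P 0 i k * z) (hIHPU A hA L hL k hk k0 hk0)
      _ = (∑ k ∈ A, P 0 i k) * ∑ j ∈ L, QU k0 j := by rw [Finset.sum_mul]
      _ = (∑ k ∈ A, U 0 i' k) * ∑ j ∈ L, QU k0 j := by
          rw [hsim 0 K hK A hA i hi i' hi']
      _ = ∑ k ∈ A, U 0 i' k * ∑ j ∈ L, QU k j := by
          rw [Finset.sum_mul]
          exact Finset.sum_congr rfl fun k hk =>
            congrArg (fun z => U 0 i' k * z) (hIHUU A hA L hL k0 hk0 k hk)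

/-- if `P b ∼ U b` (equal grouped matrices) for each `b`, where all are
`[Δ_b]`-stable on `Δ_{b+1}`, then `P₁⋯P_t ∼ U₁⋯U_t`, i.e. the grouped matrices of the
two products are equal. -/
theorem chainProd_similar (t : ℕ) (ht : 1 ≤ t)
    (n : Fin (t + 1) → ℕ)
    (Δ : ∀ i : Fin (t + 1), Finpartition (Finset.univ : Finset (Fin (n i))))
    (P U : ∀ b : Fin t, Matrix (Fin (n b.castSucc)) (Fin (n b.succ)) ℂ)
    (hP : ∀ b : Fin t, IsStableOn (P b) (Δ b.castSucc) (Δ b.succ))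
    (hU : ∀ b : Fin t, IsStableOn (U b) (Δ b.castSucc) (Δ b.succ))
    (hsim : ∀ b : Fin t, ∀ K ∈ (Δ b.castSucc).parts, ∀ L ∈ (Δ b.succ).parts, ∀ i ∈ K,
      ∑ j ∈ L, P b i j = ∑ j ∈ L, U b i j) :
    ∀ K ∈ (Δ 0).parts, ∀ L ∈ (Δ (Fin.last t)).parts, ∀ i ∈ K,
      ∑ j ∈ L, chainProd t (fun i => Fin (n i)) P i j =
      ∑ j ∈ L, chainProd t (fun i => Fin (n i)) U i j := by
  intro K hK L hL i hi
  refine chainProd_key t n Δ P U ?_ K hK L hL i hi i hi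
  intro b K hK L hL x hx y hy
  exact (hsim b K hK L hL x hx).trans (hU b K hK L hL x hx y hy)
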